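/- There exists a delegation graph with a cycle, a two-alternative election, and a majority (plurality) voting rule satisfying cast participation, such that under the depth-first delegation rule a casting voter s becomes strictly worse off when an abstaining voter t joins the delegating electorate and is assigned s as her guru; hence the depth-first delegation rule does not guarantee guru participation. -/

import Mathlib

/-- A delegation graph: voters are partitioned into casting, delegating and
abstaining (neither) voters; `weight a b = some x` iff delegating voter `a`
ranks `b` at position `x`. -/
structure DelGraph (V : Type) where
  cast : V → Prop
  deleg : V → Prop
  weight : V → V → Option ℕ

namespace DelGraph

variable {V : Type}

/-- Edge of the delegation graph. -/
def Edge (G : DelGraph V) (a b : V) : Prop := G.weight a b ≠ none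

/-- The weight sequence of a chain. -/
def weights (G : DelGraph V) (c : List V) : List ℕ :=
  (c.zip c.tail).map fun p => (G.weight p.1 p.2).getD 0

/-- A delegation chain for `i` : a repetition-free directed path starting at
the delegating voter `i` and ending at a casting voter. -/
def IsChain (G : DelGraph V) (i : V) (c : List V) : Prop :=
  c.head? = some i ∧ G.deleg i ∧ c.Nodup ∧ List.Chain' G.Edge c ∧
    ∃ j, c.getLast? = some j ∧ G.cast j

/-- Lexicographic (strict) order on weight sequences. -/
def LexLt (u v : List ℕ) : Prop := List.Lex (· < ·) u v

/-- Depth-first delegation: the selected chain has lexicographically minimal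
weight sequence. -/
def DFSelect (G : DelGraph V) (i : V) (c : List V) : Prop :=
  G.IsChain i c ∧ ∀ c', G.IsChain i c' → ¬ LexLt (G.weights c') (G.weights c)

/-- `j` is the guru assigned to `i` by the depth-first delegation rule. -/
def DFGuru (G : DelGraph V) (i j : V) : Prop :=
  ∃ c, G.DFSelect i c ∧ c.getLast? = some j

/-- Breadth-first comparison: shorter length first, lexicographically smaller
weight sequence among equal-length chains. -/
def BFLt (G : DelGraph V) (c' c : List V) : Prop :=
  c'.length < c.length ∨
    (c'.length = c.length ∧ LexLt (G.weights c') (G.weights c))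

/-- Breadth-first delegation: the selected chain is minimal for `BFLt`. -/
def BFSelect (G : DelGraph V) (i : V) (c : List V) : Prop :=
  G.IsChain i c ∧ ∀ c', G.IsChain i c' → ¬ G.BFLt c' c

/-- `j` is the guru assigned to `i` by the breadth-first delegation rule. -/
def BFGuru (G : DelGraph V) (i j : V) : Prop :=
  ∃ c, G.BFSelect i c ∧ c.getLast? = some j

/-- The delegation graph has no directed cycle. -/
def Acyclic (G : DelGraph V) : Prop :=
  ∀ v, ¬ Relation.TransGen G.Edge v v

/-- `G'` is obtained from `G` when the previously abstaining voter `j` joins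
the delegating electorate (adding `j`'s outgoing edges). -/
def Joins (G G' : DelGraph V) (j : V) : Prop :=
  ¬ G.deleg j ∧ ¬ G.cast j ∧ (∀ b, G.weight j b = none) ∧
    (∀ v, G'.cast v ↔ G.cast v) ∧ (∀ v, G'.deleg v ↔ G.deleg v ∨ v = j) ∧
    (∀ a b, a ≠ j → G'.weight a b = G.weight a b)

/-- `G'` is obtained from `G` by removing the delegating voter `j` (she now
abstains): node `j` and all incident edges are deleted. -/
def Removes (G G' : DelGraph V) (j : V) : Prop :=
  (∀ v, G'.cast v ↔ G.cast v) ∧ (∀ v, G'.deleg v ↔ G.deleg v ∧ v ≠ j) ∧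
    (∀ a b, (a = j ∨ b = j) → G'.weight a b = none) ∧
    (∀ a b, a ≠ j → b ≠ j → G'.weight a b = G.weight a b)

end DelGraph

/- Concrete delegation graph of Figure 1 on voters
   p = 0, q = 1, r = 2, s = 3, t = 4 :
   p ranks q first, r second; q ranks t first, s second;
   t ranks p first, r second; r and s cast votes. -/

def w5 (a b : Fin 5) : Option ℕ :=
  match a.val, b.val with
  | 0, 1 => some 1
  | 0, 2 => some 2
  | 1, 4 => some 1
  | 1, 3 => some 2
  | 4, 0 => some 1
  | 4, 2 => some 2
  | _, _ => none

/-- Figure 1(b): `p, q, t` delegate, `r, s` cast. -/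
def Gb : DelGraph (Fin 5) :=
  ⟨fun v => v.val = 2 ∨ v.val = 3, fun v => v.val = 0 ∨ v.val = 1 ∨ v.val = 4, w5⟩

/-- Figure 1(a): `p, q` delegate, `r, s` cast, `t` abstains. -/
def Ga : DelGraph (Fin 5) :=
  ⟨fun v => v.val = 2 ∨ v.val = 3, fun v => v.val = 0 ∨ v.val = 1,
    fun a b => if a.val = 4 then none else w5 a b⟩

open scoped Classical in
/-- The voting weight of casting voter `c` (1 for herself plus the voters
delegating to her) under the depth-first delegation rule. -/
noncomputable def dfTally (G : DelGraph (Fin 5)) (c : Fin 5) : ℕ :=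
  (if G.cast c then 1 else 0) + Nat.card {k : Fin 5 // G.DFGuru k c}

open scoped Classical in
/-- The voting weight of casting voter `c` under breadth-first delegation. -/
noncomputable def bfTally (G : DelGraph (Fin 5)) (c : Fin 5) : ℕ :=
  (if G.cast c then 1 else 0) + Nat.card {k : Fin 5 // G.BFGuru k c}


section Aux

instance : DecidablePred Ga.cast := fun v => inferInstanceAs (Decidable (v.val = 2 ∨ v.val = 3))
instance : DecidablePred Gb.cast := fun v => inferInstanceAs (Decidable (v.val = 2 ∨ v.val = 3))
instance : DecidablePred Ga.deleg := fun v => inferInstanceAs (Decidable (v.val = 0 ∨ v.val = 1))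
instance : DecidablePred Gb.deleg :=
  fun v => inferInstanceAs (Decidable (v.val = 0 ∨ v.val = 1 ∨ v.val = 4))

instance (priority := 2000) decChainK {α : Type} {R : α → α → Prop} [DecidableRel R] :
    ∀ (a : α) (l : List α), Decidable (List.Chain R a l)
  | _, [] => isTrue .nil
  | a, b :: l => @decidable_of_iff _ _ List.chain_cons.symm
      (@instDecidableAnd _ _ _ (decChainK b l))

instance (priority := 2000) decChainK' {α : Type} {R : α → α → Prop} [DecidableRel R] :
    ∀ (l : List α), Decidable (List.Chain' R l)
  | [] => isTrue List.isChain_nil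
  | a :: l => inferInstanceAs (Decidable (List.Chain R a l))

instance (G : DelGraph (Fin 5)) : DecidableRel G.Edge :=
  fun a b => inferInstanceAs (Decidable (G.weight a b ≠ none))
instance : DecidableRel DelGraph.LexLt :=
  fun u v => inferInstanceAs (Decidable (List.Lex (· < ·) u v))
instance (i : Fin 5) : DecidablePred (Ga.IsChain i) := fun c =>
  inferInstanceAs (Decidable (c.head? = some i ∧ Ga.deleg i ∧ c.Nodup ∧
    List.Chain' Ga.Edge c ∧ ∃ j, c.getLast? = some j ∧ Ga.cast j))
instance (i : Fin 5) : DecidablePred (Gb.IsChain i) := fun c =>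
  inferInstanceAs (Decidable (c.head? = some i ∧ Gb.deleg i ∧ c.Nodup ∧
    List.Chain' Gb.Edge c ∧ ∃ j, c.getLast? = some j ∧ Gb.cast j))

/-- All duplicate-free lists over `Fin 5` of a given length. -/
def listsLen : ℕ → List (List (Fin 5))
  | 0 => [[]]
  | n+1 => (listsLen n).flatMap fun l =>
      (([0,1,2,3,4] : List (Fin 5)).filter (· ∉ l)).map (· :: l)

/-- All duplicate-free lists over `Fin 5`. -/
def allND : List (List (Fin 5)) := (List.range 6).flatMap listsLen

lemma mem_listsLen (l : List (Fin 5)) (h : l.Nodup) : l ∈ listsLen l.length := by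
  induction l with
  | nil => simp [listsLen]
  | cons a l ih =>
    have ha : ∀ a : Fin 5, a ∈ ([0,1,2,3,4] : List (Fin 5)) := by decide
    exact List.mem_flatMap.2 ⟨l, ih (List.nodup_cons.1 h).2, List.mem_map.2
      ⟨a, List.mem_filter.2 ⟨ha a, by simpa using (List.nodup_cons.1 h).1⟩, rfl⟩⟩

lemma mem_allND {l : List (Fin 5)} (h : l.Nodup) : l ∈ allND := by
  have hlen : l.length ≤ 5 := by simpa using h.length_le_card
  exact List.mem_flatMap.2 ⟨l.length, List.mem_range.2 (by omega), mem_listsLen l h⟩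

lemma dfGuru_iff (G : DelGraph (Fin 5)) (i j : Fin 5) :
    G.DFGuru i j ↔ ∃ c ∈ allND, G.IsChain i c ∧
      (∀ c' ∈ allND, G.IsChain i c' → ¬ DelGraph.LexLt (G.weights c') (G.weights c)) ∧
      c.getLast? = some j := by
  constructor
  · rintro ⟨c, ⟨hc, hmin⟩, hlast⟩
    exact ⟨c, mem_allND hc.2.2.1, hc, fun c' _ h => hmin c' h, hlast⟩
  · rintro ⟨c, _, hc, hmin, hlast⟩
    exact ⟨c, ⟨hc, fun c' h => hmin c' (mem_allND h.2.2.1) h⟩, hlast⟩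

end Aux


set_option maxRecDepth 100000 in
/-- in the concrete election of Figure 1 (graph with a cycle),
under depth-first delegation the casting voter `s = 3` (who votes No, while
`r = 2` votes Yes) becomes strictly worse off when the abstaining voter
`t = 4` joins the delegating electorate and is assigned `s` as her guru:
with `t` abstaining No wins the majority vote; with `t` delegating Yes wins.
Hence depth-first delegation does not guarantee guru participation. -/
theorem stmt5 :
    DelGraph.Joins Ga Gb (4 : Fin 5) ∧
    Relation.TransGen Gb.Edge (0 : Fin 5) 0 ∧
    Gb.DFGuru (4 : Fin 5) 3 ∧
    dfTally Ga 3 > dfTally Ga 2 ∧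
    dfTally Gb 2 > dfTally Gb 3 := by
  have hGa3 : ∀ k : Fin 5, Ga.DFGuru k 3 ↔ (k = 0 ∨ k = 1) := by
    intro k; fin_cases k <;> (rw [dfGuru_iff]; decide)
  have hGa2 : ∀ k : Fin 5, Ga.DFGuru k 2 ↔ False := by
    intro k; fin_cases k <;> (rw [dfGuru_iff]; decide)
  have hGb2 : ∀ k : Fin 5, Gb.DFGuru k 2 ↔ (k = 0 ∨ k = 1) := by
    intro k; fin_cases k <;> (rw [dfGuru_iff]; decide)
  have hGb3 : ∀ k : Fin 5, Gb.DFGuru k 3 ↔ (k = 4) := by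
    intro k; fin_cases k <;> (rw [dfGuru_iff]; decide)
  have cGa3 : Nat.card {k : Fin 5 // Ga.DFGuru k 3} = 2 := by
    rw [Nat.card_congr (Equiv.subtypeEquivRight hGa3), Nat.card_eq_fintype_card]; decide
  have cGa2 : Nat.card {k : Fin 5 // Ga.DFGuru k 2} = 0 := by
    rw [Nat.card_congr (Equiv.subtypeEquivRight hGa2), Nat.card_eq_fintype_card]; decide
  have cGb2 : Nat.card {k : Fin 5 // Gb.DFGuru k 2} = 2 := by
    rw [Nat.card_congr (Equiv.subtypeEquivRight hGb2), Nat.card_eq_fintype_card]; decide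
  have cGb3 : Nat.card {k : Fin 5 // Gb.DFGuru k 3} = 1 := by
    rw [Nat.card_congr (Equiv.subtypeEquivRight hGb3), Nat.card_eq_fintype_card]; decide
  refine ⟨⟨by decide, by decide, by decide, by decide, by decide, by decide⟩, ?_, ?_, ?_, ?_⟩
  · exact Relation.TransGen.head (b := 1) (by decide)
      (Relation.TransGen.head (b := 4) (by decide)
        (Relation.TransGen.single (by decide)))
  · rw [dfGuru_iff]; decide
  · unfold dfTally
    rw [cGa3, cGa2, if_pos (show Ga.cast 3 from by decide),
      if_pos (show Ga.cast 2 from by decide)]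
    omega
  · unfold dfTally
    rw [cGb2, cGb3, if_pos (show Gb.cast 2 from by decide),
      if_pos (show Gb.cast 3 from by decide)]
    omega
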